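/- Let L ∈ ℝ^{n×n} be symmetric, M ∈ ℝ^{n×n}, C ∈ ℝ, let q₀ : ℝ^n → ℝ be differentiable, and fix φ^{n-1}, φ^n ∈ ℝ^n, q^n ∈ ℝ, Δt > 0. Set φ̄ = (3φ^n − φ^{n-1})/2 and suppose φ^{n+1} ∈ ℝ^n, q^{n+1} ∈ ℝ satisfy the semi-discrete EQ Crank–Nicolson scheme (φ^{n+1} − φ^n)/Δt = −Mμ and (q^{n+1} − q^n)/Δt = ⟨∇q₀(φ̄), (φ^{n+1} − φ^n)/Δt⟩, where μ = L(φ^n + φ^{n+1})/2 + (q^n + q^{n+1})∇q₀(φ̄). Then, with E^k = (1/2)⟨φ^k, Lφ^k⟩ + (q^k)² − C, the discrete energy dissipation law (E^{n+1} − E^n)/Δt = −⟨μ, Mμ⟩ holds exactly; in particular E^{n+1} ≤ E^n whenever M is positive semidefinite. -/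

import Mathlib

open scoped RealInnerProductSpace
open Matrix

noncomputable section

abbrev Vec (n : ℕ) := EuclideanSpace ℝ (Fin n)

/-- Action of a matrix on a Euclidean vector. -/
def mv {n : ℕ} (A : Matrix (Fin n) (Fin n) ℝ) (x : Vec n) : Vec n :=
  Matrix.toEuclideanLin A x

lemma inner_mv {n : ℕ} (A : Matrix (Fin n) (Fin n) ℝ) (x y : Vec n) :
    ⟪x, mv A y⟫ = x ⬝ᵥ (A *ᵥ y) := by
  have h : (Matrix.toEuclideanLin A y : Fin n → ℝ) = A *ᵥ y :=
    Matrix.piLp_ofLp_toEuclideanLin A y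
  simp [mv, PiLp.inner_apply, h, dotProduct]
  exact Finset.sum_congr rfl (fun _ _ => mul_comm _ _)

lemma mv_symm {n : ℕ} {L : Matrix (Fin n) (Fin n) ℝ} (hL : L.IsSymm) (x y : Vec n) :
    ⟪x, mv L y⟫ = ⟪y, mv L x⟫ := by
  rw [inner_mv, inner_mv, Matrix.dotProduct_mulVec, ← Matrix.mulVec_transpose, hL.eq,
    dotProduct_comm]

lemma mv_add {n : ℕ} (A : Matrix (Fin n) (Fin n) ℝ) (x y : Vec n) :
    mv A (x + y) = mv A x + mv A y := by simp [mv]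

lemma mv_smul {n : ℕ} (A : Matrix (Fin n) (Fin n) ℝ) (c : ℝ) (x : Vec n) :
    mv A (c • x) = c • mv A x := by simp [mv]

/-- discrete energy law of the semi-discrete EQ Crank–Nicolson scheme:
if `(φⁿ⁺¹ − φⁿ)/Δt = −Mμ` and `(qⁿ⁺¹ − qⁿ)/Δt = ⟨∇q₀(φ̄), (φⁿ⁺¹ − φⁿ)/Δt⟩` with
`μ = L(φⁿ + φⁿ⁺¹)/2 + (qⁿ + qⁿ⁺¹)∇q₀(φ̄)` and `φ̄ = (3φⁿ − φⁿ⁻¹)/2`, then for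
`Eᵏ = (1/2)⟨φᵏ, Lφᵏ⟩ + (qᵏ)² − C` we have `(Eⁿ⁺¹ − Eⁿ)/Δt = −⟨μ, Mμ⟩`, and
`Eⁿ⁺¹ ≤ Eⁿ` when `M` is positive semidefinite. -/
theorem eq_scheme_discrete_energy_law {n : ℕ}
    (L M : Matrix (Fin n) (Fin n) ℝ) (hL : L.IsSymm) (C : ℝ)
    (q₀ : Vec n → ℝ) (hq₀ : Differentiable ℝ q₀)
    (φm φn φn1 : Vec n) (qn qn1 : ℝ) (Δt : ℝ) (hΔt : 0 < Δt)
    (φbar : Vec n) (hφbar : φbar = (1 / 2 : ℝ) • ((3 : ℝ) • φn - φm))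
    (μ : Vec n)
    (hμ : μ = mv L ((1 / 2 : ℝ) • (φn + φn1)) + (qn + qn1) • gradient q₀ φbar)
    (hscheme_φ : (1 / Δt) • (φn1 - φn) = -(mv M μ))
    (hscheme_q : (qn1 - qn) / Δt = ⟪gradient q₀ φbar, (1 / Δt) • (φn1 - φn)⟫) :
    (((1 / 2 : ℝ) * ⟪φn1, mv L φn1⟫ + qn1 ^ 2 - C)
        - ((1 / 2 : ℝ) * ⟪φn, mv L φn⟫ + qn ^ 2 - C)) / Δt
      = -⟪μ, mv M μ⟫ ∧
    (M.PosSemidef →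
      (1 / 2 : ℝ) * ⟪φn1, mv L φn1⟫ + qn1 ^ 2 - C
        ≤ (1 / 2 : ℝ) * ⟪φn, mv L φn⟫ + qn ^ 2 - C) := by
  have hΔt' : Δt ≠ 0 := ne_of_gt hΔt
  set g := gradient q₀ φbar with hg
  set d := φn1 - φn with hd
  -- q increment
  have hq : qn1 - qn = ⟪g, d⟫ := by
    have h := hscheme_q
    rw [real_inner_smul_right] at h
    have h2 : qn1 - qn = Δt * ((1 / Δt) * ⟪g, d⟫) := by
      rw [← h]; field_simp
    rw [h2]; field_simp
  -- energy difference numerator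
  have hsym : ⟪φn1, mv L φn⟫ = ⟪φn, mv L φn1⟫ := mv_symm hL φn1 φn
  have hquad : (1 / 2 : ℝ) * ⟪φn1, mv L φn1⟫ - (1 / 2 : ℝ) * ⟪φn, mv L φn⟫
      = ⟪d, mv L ((1 / 2 : ℝ) • (φn + φn1))⟫ := by
    rw [hd, mv_smul, mv_add, real_inner_smul_right, inner_sub_left, inner_add_right,
      inner_add_right, hsym]
    ring
  have hE : ((1 / 2 : ℝ) * ⟪φn1, mv L φn1⟫ + qn1 ^ 2 - C)
      - ((1 / 2 : ℝ) * ⟪φn, mv L φn⟫ + qn ^ 2 - C) = ⟪d, μ⟫ := by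
    have hq2 : qn1 ^ 2 - qn ^ 2 = (qn + qn1) * ⟪g, d⟫ := by
      rw [← hq]; ring
    rw [hμ, inner_add_right, real_inner_smul_right, real_inner_comm g d]
    rw [← hquad, ← hq2]
    ring
  have hmain : (((1 / 2 : ℝ) * ⟪φn1, mv L φn1⟫ + qn1 ^ 2 - C)
      - ((1 / 2 : ℝ) * ⟪φn, mv L φn⟫ + qn ^ 2 - C)) / Δt = -⟪μ, mv M μ⟫ := by
    rw [hE]
    have : (⟪d, μ⟫ : ℝ) / Δt = ⟪(1 / Δt) • d, μ⟫ := by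
      rw [real_inner_smul_left]; ring
    rw [this, hscheme_φ, inner_neg_left, real_inner_comm]
  refine ⟨hmain, fun hM => ?_⟩
  have hpos : 0 ≤ ⟪μ, mv M μ⟫ := by
    rw [inner_mv]
    have := hM.dotProduct_mulVec_nonneg (fun i => μ i)
    simpa using this
  have hle : (((1 / 2 : ℝ) * ⟪φn1, mv L φn1⟫ + qn1 ^ 2 - C)
      - ((1 / 2 : ℝ) * ⟪φn, mv L φn⟫ + qn ^ 2 - C)) / Δt ≤ 0 := by
    rw [hmain]; linarith
  nlinarith [mul_le_mul_of_nonneg_right hle (le_of_lt hΔt),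
    div_mul_cancel₀ (((1 / 2 : ℝ) * ⟪φn1, mv L φn1⟫ + qn1 ^ 2 - C)
      - ((1 / 2 : ℝ) * ⟪φn, mv L φn⟫ + qn ^ 2 - C)) hΔt']

end
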